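/- Let M be a maximum matching of a simple graph G and v ∈ A(G) (a vertex outside D(G) adjacent to D(G)). Then M contains an edge joining v to a vertex in some connected component of the subgraph induced by D(G). -/
import Mathlib


open Finset

namespace TB

variable {V W : Type*}

/-- A matching of `G` given as a finite set of edges: each element is an edge of `G`
and no two distinct edges share a vertex. -/
def IsMatching (G : SimpleGraph V) (M : Finset (Sym2 V)) : Prop :=
  (∀ e ∈ M, e ∈ G.edgeSet) ∧
    ∀ e ∈ M, ∀ f ∈ M, e ≠ f → ∀ v : V, v ∈ e → v ∉ f

/-- A perfect matching: a matching covering every vertex. -/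
def IsPerfectMatching (G : SimpleGraph V) (M : Finset (Sym2 V)) : Prop :=
  IsMatching G M ∧ ∀ v : V, ∃ e ∈ M, v ∈ e

/-- The matching number `mat(G)`: the maximum size of a matching of `G`. -/
noncomputable def matchingNumber (G : SimpleGraph V) [Fintype V] : ℕ := by
  classical
  exact Finset.univ.powerset.sup fun M => if IsMatching G M then M.card else 0

/-- `T` is an independent set of `G`. -/
def IsIndepSet (G : SimpleGraph V) (T : Finset V) : Prop :=
  ∀ u ∈ T, ∀ v ∈ T, ¬ G.Adj u v

/-- The neighborhood `N_G(T)` of a set of vertices `T`. -/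
noncomputable def nbrSet (G : SimpleGraph V) [Fintype V] (T : Finset V) : Finset V := by
  classical
  exact Finset.univ.filter fun v => ∃ t ∈ T, G.Adj t v

/-- `G` is a Tutte-Berge graph: some independent set `T` satisfies
`|T| = |N_G(T)| + |V(G)| - 2 mat(G)` (written additively to avoid truncated subtraction). -/
noncomputable def TutteBerge (G : SimpleGraph V) [Fintype V] : Prop :=
  ∃ T : Finset V, IsIndepSet G T ∧
    T.card + 2 * matchingNumber G = (nbrSet G T).card + Fintype.card V

/-- `G` is factor-critical: deleting any vertex leaves a graph with a perfect matching. -/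
def FactorCritical (G : SimpleGraph V) : Prop :=
  ∀ v : V, ∃ M, IsPerfectMatching (G.induce {x | x ≠ v}) M

/-- The Gallai-Edmonds set `D(G)`: vertices missed by at least one maximum matching. -/
noncomputable def gallaiD (G : SimpleGraph V) [Fintype V] : Finset V := by
  classical
  exact Finset.univ.filter fun v =>
    ∃ M, IsMatching G M ∧ M.card = matchingNumber G ∧ ∀ e ∈ M, v ∉ e

/-- The cone `G*` over `G`: a new apex vertex (`none`) joined to every vertex of `G`. -/
def cone (G : SimpleGraph V) : SimpleGraph (Option V) :=
  SimpleGraph.fromRel fun a b =>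
    a = none ∨ ∃ u v, a = some u ∧ b = some v ∧ G.Adj u v

/-- The edge polytope `P_H`: convex hull of the points `e_u + e_v` over edges `{u,v}` of `H`. -/
noncomputable def edgePolytope (H : SimpleGraph W) : Set (W → ℝ) := by
  classical
  exact convexHull ℝ
    {x | ∃ u v, H.Adj u v ∧
      x = fun w => (if w = u then (1 : ℝ) else 0) + (if w = v then (1 : ℝ) else 0)}

/-- Every connected component of `H` contains an odd cycle. -/
def HasOddCycleComponents (H : SimpleGraph W) : Prop :=
  ∀ c : H.ConnectedComponent, ∃ u, u ∈ c.supp ∧ ∃ p : H.Walk u u, p.IsCycle ∧ Odd p.length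

/-- The neighborhood of a set of vertices, as a set. -/
def nbrSetSet (H : SimpleGraph W) (T : Set W) : Set W := {w | ∃ t ∈ T, H.Adj t w}

/-- The bipartite graph `B_H(T)` induced by `T`: vertex set `T ∪ N_H(T)`,
with the edges of `H` joining a vertex of `T` to a vertex of `N_H(T)`. -/
def inducedBipartite (H : SimpleGraph W) (T : Set W) :
    SimpleGraph ↥(T ∪ nbrSetSet H T) :=
  SimpleGraph.fromRel fun a b => (a : W) ∈ T ∧ H.Adj a b

/-- An independent set `T` is fundamental in `H` if `B_H(T)` is connected (trivially so
if empty) and, when `T ∪ N_H(T) ≠ V(H)`, each connected component of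
`H \ (T ∪ N_H(T))` contains an odd cycle. -/
def Fundamental (H : SimpleGraph W) (T : Set W) : Prop :=
  (∀ u ∈ T, ∀ v ∈ T, ¬ H.Adj u v) ∧
  (inducedBipartite H T).Preconnected ∧
  (T ∪ nbrSetSet H T ≠ Set.univ →
    HasOddCycleComponents (H.induce (T ∪ nbrSetSet H T)ᶜ))


lemma card_le_matchingNumber {V : Type*} [Fintype V] (G : SimpleGraph V)
    {N : Finset (Sym2 V)} (h : IsMatching G N) : N.card ≤ matchingNumber G := by
  classical
  have hmem : N ∈ (Finset.univ : Finset (Sym2 V)).powerset := by simp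
  have h2 := Finset.le_sup (f := fun M => if IsMatching G M then M.card else 0) hmem
  simp only [if_pos h] at h2
  unfold matchingNumber
  exact h2

lemma mem_gallaiD {V : Type*} [Fintype V] (G : SimpleGraph V) {v : V} :
    v ∈ gallaiD G ↔ ∃ M, IsMatching G M ∧ M.card = matchingNumber G ∧ ∀ e ∈ M, v ∉ e := by
  classical
  unfold gallaiD
  simp [Finset.mem_filter]

lemma matching_eq_of_mem {V : Type*} {G : SimpleGraph V} {K : Finset (Sym2 V)}
    (hK : IsMatching G K) {e f : Sym2 V} (he : e ∈ K) (hf : f ∈ K) {x : V}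
    (hxe : x ∈ e) (hxf : x ∈ f) : e = f := by
  by_contra hne
  exact hK.2 e he f hf hne x hxe hxf

lemma key {V : Type*} [Fintype V] [DecidableEq V] (G : SimpleGraph V)
    (M : Finset (Sym2 V)) (hM : IsMatching G M) (hMmax : M.card = matchingNumber G)
    (v w : V) (hvw : s(v,w) ∈ M) :
    ∀ n : ℕ, ∀ N : Finset (Sym2 V), ∀ a : V,
      IsMatching G N → N.card = matchingNumber G → (∀ e ∈ N, a ∉ e) →
      ((M \ N) ∪ (N \ M)).card ≤ n →
      ((∃ M' : Finset (Sym2 V), IsMatching G M' ∧ M'.card = matchingNumber G ∧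
        (∀ e ∈ M', a ∉ e) ∧ s(v,w) ∈ M' ∧ (M' \ M) ∪ (M \ M') ⊆ (M \ N) ∪ (N \ M))
      ∨ (∃ L, IsMatching G L ∧ L.card = matchingNumber G ∧ ∀ e ∈ L, v ∉ e)
      ∨ (∃ L, IsMatching G L ∧ L.card = matchingNumber G ∧ ∀ e ∈ L, w ∉ e)) := by
  intro n
  induction n using Nat.strong_induction_on with
  | _ n IH =>
  intro N a hN hNmax hNa hcard
  by_cases hacov : ∃ e ∈ M, a ∈ e
  swap
  · push_neg at hacov
    left
    exact ⟨M, hM, hMmax, hacov, hvw, by simp⟩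
  obtain ⟨e, heM, hae⟩ := hacov
  obtain ⟨t, rfl⟩ := Sym2.mem_iff_exists.mp hae
  have hadjat : G.Adj a t := (SimpleGraph.mem_edgeSet G).mp (hM.1 _ heM)
  have hat_ne : a ≠ t := hadjat.ne
  by_cases hav : a = v
  · subst hav; right; left; exact ⟨N, hN, hNmax, hNa⟩
  by_cases haw : a = w
  · subst haw; right; right; exact ⟨N, hN, hNmax, hNa⟩
  have htv : t ≠ v := by
    intro h; subst h
    have heq := matching_eq_of_mem hM heM hvw (x := t) (by simp) (by simp)
    rcases Sym2.eq_iff.mp heq with ⟨h1, h2⟩ | ⟨h1, h2⟩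
    · exact hat_ne h1
    · exact haw h1
  have htw : t ≠ w := by
    intro h; subst h
    have heq := matching_eq_of_mem hM heM hvw (x := t) (by simp) (by simp)
    rcases Sym2.eq_iff.mp heq with ⟨h1, h2⟩ | ⟨h1, h2⟩
    · exact hav h1
    · exact hat_ne h1
  have hatN : s(a,t) ∉ N := fun h => hNa _ h (by simp)
  by_cases htN : ∃ f ∈ N, t ∈ f
  swap
  · push_neg at htN
    exfalso
    have hins : IsMatching G (insert s(a,t) N) := by
      constructor
      · intro e he
        rcases Finset.mem_insert.mp he with rfl | he'
        · exact (SimpleGraph.mem_edgeSet G).mpr hadjat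
        · exact hN.1 _ he'
      · intro e he f hf hne x hxe hxf
        rcases Finset.mem_insert.mp he with rfl | he'
        · rcases Finset.mem_insert.mp hf with rfl | hf'
          · exact hne rfl
          · rcases Sym2.mem_iff.mp hxe with rfl | rfl
            · exact hNa _ hf' hxf
            · exact htN _ hf' hxf
        · rcases Finset.mem_insert.mp hf with rfl | hf'
          · rcases Sym2.mem_iff.mp hxf with rfl | rfl
            · exact hNa _ he' hxe
            · exact htN _ he' hxe
          · exact hN.2 e he' f hf' hne x hxe hxf
    have hc := card_le_matchingNumber G hins
    rw [Finset.card_insert_of_notMem hatN] at hc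
    omega
  obtain ⟨f, hfN, htf⟩ := htN
  obtain ⟨r, rfl⟩ := Sym2.mem_iff_exists.mp htf
  have hadjtr : G.Adj t r := (SimpleGraph.mem_edgeSet G).mp (hN.1 _ hfN)
  have htr_ne : t ≠ r := hadjtr.ne
  have hra : r ≠ a := by
    intro h; subst h
    exact hNa _ hfN (by simp)
  have htrM : s(t,r) ∉ M := by
    intro h
    have heq := matching_eq_of_mem hM heM h (x := t) (by simp) (by simp)
    rcases Sym2.eq_iff.mp heq with ⟨h1, h2⟩ | ⟨h1, h2⟩
    · exact hat_ne h1
    · exact hra h1.symm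
  have hatN_erase : s(a,t) ∉ N.erase s(t,r) := fun h => hatN (Finset.mem_of_mem_erase h)
  set N' := insert s(a,t) (N.erase s(t,r)) with hN'def
  have hN'match : IsMatching G N' := by
    constructor
    · intro e he
      rcases Finset.mem_insert.mp he with rfl | he'
      · exact (SimpleGraph.mem_edgeSet G).mpr hadjat
      · exact hN.1 _ (Finset.mem_of_mem_erase he')
    · intro e he f hf hne x hxe hxf
      rcases Finset.mem_insert.mp he with rfl | he'
      · rcases Finset.mem_insert.mp hf with rfl | hf'
        · exact hne rfl
        · rcases Sym2.mem_iff.mp hxe with rfl | rfl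
          · exact hNa _ (Finset.mem_of_mem_erase hf') hxf
          · have heq := matching_eq_of_mem hN (Finset.mem_of_mem_erase hf') hfN
              (x := x) hxf (by simp)
            exact Finset.ne_of_mem_erase hf' heq
      · rcases Finset.mem_insert.mp hf with rfl | hf'
        · rcases Sym2.mem_iff.mp hxf with rfl | rfl
          · exact hNa _ (Finset.mem_of_mem_erase he') hxe
          · have heq := matching_eq_of_mem hN (Finset.mem_of_mem_erase he') hfN
              (x := x) hxe (by simp)
            exact Finset.ne_of_mem_erase he' heq
        · exact hN.2 e (Finset.mem_of_mem_erase he') f (Finset.mem_of_mem_erase hf') hne x hxe hxf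
  have hNpos : 0 < N.card := Finset.card_pos.mpr ⟨_, hfN⟩
  have hN'card : N'.card = matchingNumber G := by
    rw [hN'def, Finset.card_insert_of_notMem hatN_erase, Finset.card_erase_of_mem hfN]
    omega
  have hN'r : ∀ e ∈ N', r ∉ e := by
    intro e he hre
    rcases Finset.mem_insert.mp he with rfl | he'
    · rcases Sym2.mem_iff.mp hre with h | h
      · exact hra h
      · exact htr_ne h.symm
    · have heq := matching_eq_of_mem hN (Finset.mem_of_mem_erase he') hfN
        (x := r) hre (by simp)
      exact Finset.ne_of_mem_erase he' heq
  by_cases hrv : r = v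
  · subst hrv; right; left; exact ⟨N', hN'match, hN'card, hN'r⟩
  by_cases hrw : r = w
  · subst hrw; right; right; exact ⟨N', hN'match, hN'card, hN'r⟩
  -- the symmetric difference decreases
  have hsub : (M \ N') ∪ (N' \ M) ⊆ ((M \ N) ∪ (N \ M)).erase s(a,t) := by
    intro e he
    rw [Finset.mem_erase]
    rcases Finset.mem_union.mp he with h | h
    · obtain ⟨heM', heN'⟩ := Finset.mem_sdiff.mp h
      refine ⟨fun hcontra => heN' (hcontra ▸ Finset.mem_insert_self _ _), ?_⟩
      apply Finset.mem_union_left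
      rw [Finset.mem_sdiff]
      refine ⟨heM', fun heN2 => ?_⟩
      by_cases hetr : e = s(t,r)
      · exact htrM (hetr ▸ heM')
      · exact heN' (Finset.mem_insert_of_mem (Finset.mem_erase.mpr ⟨hetr, heN2⟩))
    · obtain ⟨heN', heM'⟩ := Finset.mem_sdiff.mp h
      have heN : e ∈ N := by
        rcases Finset.mem_insert.mp heN' with rfl | he'
        · exact absurd heM heM'
        · exact Finset.mem_of_mem_erase he'
      refine ⟨fun hcontra => heM' (hcontra ▸ heM), ?_⟩
      exact Finset.mem_union_right _ (Finset.mem_sdiff.mpr ⟨heN, heM'⟩)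
  have hat_mem : s(a,t) ∈ (M \ N) ∪ (N \ M) :=
    Finset.mem_union_left _ (Finset.mem_sdiff.mpr ⟨heM, hatN⟩)
  have hlt : ((M \ N') ∪ (N' \ M)).card < ((M \ N) ∪ (N \ M)).card :=
    lt_of_le_of_lt (Finset.card_le_card hsub) (Finset.card_erase_lt_of_mem hat_mem)
  have hIH := IH (((M \ N') ∪ (N' \ M)).card) (lt_of_lt_of_le hlt hcard)
    N' r hN'match hN'card hN'r le_rfl
  rcases hIH with ⟨M', hM'm, hM'c, hM'r, hvwM', hM'sub⟩ | h2 | h3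
  · -- reverse the step on M'
    have hatM' : s(a,t) ∈ M' := by
      by_contra hno
      have hmem2 : s(a,t) ∈ (M' \ M) ∪ (M \ M') :=
        Finset.mem_union_right _ (Finset.mem_sdiff.mpr ⟨heM, hno⟩)
      have h4 := hM'sub hmem2
      rcases Finset.mem_union.mp h4 with h5 | h5
      · exact (Finset.mem_sdiff.mp h5).2 (Finset.mem_insert_self _ _)
      · exact (Finset.mem_sdiff.mp h5).2 heM
    have htrM' : s(t,r) ∉ M' := fun h => hM'r _ h (by simp)
    have htrM'_erase : s(t,r) ∉ M'.erase s(a,t) := fun h => htrM' (Finset.mem_of_mem_erase h)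
    set M'' := insert s(t,r) (M'.erase s(a,t)) with hM''def
    left
    have hM''match : IsMatching G M'' := by
      constructor
      · intro e he
        rcases Finset.mem_insert.mp he with rfl | he'
        · exact (SimpleGraph.mem_edgeSet G).mpr hadjtr
        · exact hM'm.1 _ (Finset.mem_of_mem_erase he')
      · intro e he f hf hne x hxe hxf
        rcases Finset.mem_insert.mp he with rfl | he'
        · rcases Finset.mem_insert.mp hf with rfl | hf'
          · exact hne rfl
          · rcases Sym2.mem_iff.mp hxe with rfl | rfl
            · have heq := matching_eq_of_mem hM'm (Finset.mem_of_mem_erase hf') hatM'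
                (x := x) hxf (by simp)
              exact Finset.ne_of_mem_erase hf' heq
            · exact hM'r _ (Finset.mem_of_mem_erase hf') hxf
        · rcases Finset.mem_insert.mp hf with rfl | hf'
          · rcases Sym2.mem_iff.mp hxf with rfl | rfl
            · have heq := matching_eq_of_mem hM'm (Finset.mem_of_mem_erase he') hatM'
                (x := x) hxe (by simp)
              exact Finset.ne_of_mem_erase he' heq
            · exact hM'r _ (Finset.mem_of_mem_erase he') hxe
          · exact hM'm.2 e (Finset.mem_of_mem_erase he') f (Finset.mem_of_mem_erase hf') hne
              x hxe hxf
    have hM'pos : 0 < M'.card := Finset.card_pos.mpr ⟨_, hatM'⟩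
    have hM''card : M''.card = matchingNumber G := by
      rw [hM''def, Finset.card_insert_of_notMem htrM'_erase, Finset.card_erase_of_mem hatM']
      omega
    have hM''a : ∀ e ∈ M'', a ∉ e := by
      intro e he hae2
      rcases Finset.mem_insert.mp he with rfl | he'
      · rcases Sym2.mem_iff.mp hae2 with h | h
        · exact hat_ne h
        · exact hra h.symm
      · have heq := matching_eq_of_mem hM'm (Finset.mem_of_mem_erase he') hatM'
          (x := a) hae2 (by simp)
        exact Finset.ne_of_mem_erase he' heq
    have hvwM'' : s(v,w) ∈ M'' := by
      apply Finset.mem_insert_of_mem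
      apply Finset.mem_erase.mpr
      refine ⟨?_, hvwM'⟩
      intro hcontra
      rcases Sym2.eq_iff.mp hcontra with ⟨h1, h2⟩ | ⟨h1, h2⟩
      · exact hav h1.symm
      · exact htv h1.symm
    refine ⟨M'', hM''match, hM''card, hM''a, hvwM'', ?_⟩
    intro e he
    have hsub2 : ((M \ N) ∪ (N \ M)).erase s(a,t) ⊆ (M \ N) ∪ (N \ M) :=
      Finset.erase_subset _ _
    rcases Finset.mem_union.mp he with h | h
    · obtain ⟨heM'', heMno⟩ := Finset.mem_sdiff.mp h
      rcases Finset.mem_insert.mp heM'' with rfl | he'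
      · exact Finset.mem_union_right _ (Finset.mem_sdiff.mpr ⟨hfN, htrM⟩)
      · have : e ∈ (M' \ M) ∪ (M \ M') :=
          Finset.mem_union_left _ (Finset.mem_sdiff.mpr ⟨Finset.mem_of_mem_erase he', heMno⟩)
        exact hsub2 (hsub (hM'sub this))
    · obtain ⟨heMyes, heM''no⟩ := Finset.mem_sdiff.mp h
      by_cases heM' : e ∈ M'
      · have heat : e = s(a,t) := by
          by_contra hne2
          exact heM''no (Finset.mem_insert_of_mem (Finset.mem_erase.mpr ⟨hne2, heM'⟩))
        subst heat
        exact Finset.mem_union_left _ (Finset.mem_sdiff.mpr ⟨heMyes, hatN⟩)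
      · have : e ∈ (M' \ M) ∪ (M \ M') :=
          Finset.mem_union_right _ (Finset.mem_sdiff.mpr ⟨heMyes, heM'⟩)
        exact hsub2 (hsub (hM'sub this))
  · right; left; exact h2
  · right; right; exact h3

/-- if `M` is a maximum matching of `G` and `v ∈ A(G)` (a vertex outside
`D(G)` adjacent to `D(G)`), then `M` contains an edge joining `v` to a vertex of `D(G)`. -/
theorem maximum_matching_edge_to_gallaiD {V : Type*} [Fintype V] (G : SimpleGraph V)
    (M : Finset (Sym2 V)) (hM : IsMatching G M) (hmax : M.card = matchingNumber G)
    (v : V) (hv : v ∉ gallaiD G) (hadj : ∃ u ∈ gallaiD G, G.Adj v u) :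
    ∃ u ∈ gallaiD G, s(v, u) ∈ M := by
  classical
  obtain ⟨u, huD, hadjvu⟩ := hadj
  -- v is covered by M
  have hvcov : ∃ e ∈ M, v ∈ e := by
    by_contra h
    push_neg at h
    exact hv ((mem_gallaiD G).mpr ⟨M, hM, hmax, h⟩)
  obtain ⟨e, heM, hve⟩ := hvcov
  obtain ⟨w, rfl⟩ := Sym2.mem_iff_exists.mp hve
  have hadjvw : G.Adj v w := (SimpleGraph.mem_edgeSet G).mp (hM.1 _ heM)
  have hvw_ne : v ≠ w := hadjvw.ne
  by_cases hwu : w = u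
  · exact ⟨u, huD, hwu ▸ heM⟩
  obtain ⟨N, hN, hNmax, hNu⟩ := (mem_gallaiD G).mp huD
  have hkey := key G M hM hmax v w heM (((M \ N) ∪ (N \ M)).card) N u hN hNmax hNu le_rfl
  rcases hkey with ⟨M', hM'm, hM'c, hM'u, hvwM', _⟩ | h2 | h3
  · -- swap s(v,w) for s(v,u) in M' to get a maximum matching missing w
    have huw : u ≠ w := fun h => hwu h.symm
    have huv : u ≠ v := by
      intro h; subst h
      exact hv huD
    have hvuM' : s(v,u) ∉ M' := by
      intro h
      exact hM'u _ h (by simp)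
    have hvuM'_erase : s(v,u) ∉ M'.erase s(v,w) := fun h => hvuM' (Finset.mem_of_mem_erase h)
    set L := insert s(v,u) (M'.erase s(v,w)) with hLdef
    have hLmatch : IsMatching G L := by
      constructor
      · intro e he
        rcases Finset.mem_insert.mp he with rfl | he'
        · exact (SimpleGraph.mem_edgeSet G).mpr hadjvu
        · exact hM'm.1 _ (Finset.mem_of_mem_erase he')
      · intro e he f hf hne x hxe hxf
        rcases Finset.mem_insert.mp he with rfl | he'
        · rcases Finset.mem_insert.mp hf with rfl | hf'
          · exact hne rfl
          · rcases Sym2.mem_iff.mp hxe with rfl | rfl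
            · have heq := matching_eq_of_mem hM'm (Finset.mem_of_mem_erase hf') hvwM'
                (x := x) hxf (by simp)
              exact Finset.ne_of_mem_erase hf' heq
            · exact hM'u _ (Finset.mem_of_mem_erase hf') hxf
        · rcases Finset.mem_insert.mp hf with rfl | hf'
          · rcases Sym2.mem_iff.mp hxf with rfl | rfl
            · have heq := matching_eq_of_mem hM'm (Finset.mem_of_mem_erase he') hvwM'
                (x := x) hxe (by simp)
              exact Finset.ne_of_mem_erase he' heq
            · exact hM'u _ (Finset.mem_of_mem_erase he') hxe
          · exact hM'm.2 e (Finset.mem_of_mem_erase he') f (Finset.mem_of_mem_erase hf') hne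
              x hxe hxf
    have hM'pos : 0 < M'.card := Finset.card_pos.mpr ⟨_, hvwM'⟩
    have hLcard : L.card = matchingNumber G := by
      rw [hLdef, Finset.card_insert_of_notMem hvuM'_erase, Finset.card_erase_of_mem hvwM']
      omega
    have hLw : ∀ e ∈ L, w ∉ e := by
      intro e he hwe
      rcases Finset.mem_insert.mp he with rfl | he'
      · rcases Sym2.mem_iff.mp hwe with h | h
        · exact hvw_ne h.symm
        · exact huw h.symm
      · have heq := matching_eq_of_mem hM'm (Finset.mem_of_mem_erase he') hvwM'
          (x := w) hwe (by simp)
        exact Finset.ne_of_mem_erase he' heq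
    exact ⟨w, (mem_gallaiD G).mpr ⟨L, hLmatch, hLcard, hLw⟩, heM⟩
  · exact absurd ((mem_gallaiD G).mpr h2) hv
  · exact ⟨w, (mem_gallaiD G).mpr h3, heM⟩


end TB
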